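/- Let G be a finite group with subgroups H and K such that: H has a minimal logarithmic signature; K acts transitively on the coset space G/H (i.e., G = KH); and K has a minimal logarithmic signature whose first block is the subgroup K ∩ H. Then G has a minimal logarithmic signature. -/
import Mathlib


/-- `A` is a logarithmic signature for the group `G`. -/
def IsLogSig {G : Type*} [Group G] {s : ℕ} (A : Fin s → Finset G) : Prop :=
  ∀ g : G, ∃! t : Fin s → G, (∀ i, t i ∈ A i) ∧ (List.ofFn t).prod = g

/-- The minimal possible length `∑ β_j p_j` for a logarithmic signature of a
group of order `m = ∏ p_j ^ β_j`. -/
def minLSLength (m : ℕ) : ℕ := m.factorization.sum fun p β => β * p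

/-- `G` has a minimal logarithmic signature. -/
def HasMLS (G : Type*) [Group G] [Finite G] : Prop :=
  ∃ s : ℕ, ∃ A : Fin s → Finset G,
    IsLogSig A ∧ ∑ i, (A i).card = minLSLength (Nat.card G)

lemma minLSLength_mul {m n : ℕ} (hm : m ≠ 0) (hn : n ≠ 0) :
    minLSLength (m * n) = minLSLength m + minLSLength n := by
  unfold minLSLength
  rw [Nat.factorization_mul hm hn, Finsupp.sum_add_index']
  · intro a; simp
  · intro a b c; exact add_mul b c a

lemma coe_ofFn_prod {G : Type*} [Group G] (S : Subgroup G) {n : ℕ} (v : Fin n → S) :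
    (List.ofFn (fun i => ((v i : G)))).prod = ((List.ofFn v).prod : G) := by
  have h : (List.ofFn (fun i => ((v i : G)))) = (List.ofFn v).map S.subtype := by
    rw [List.map_ofFn]; rfl
  rw [h, List.prod_hom (List.ofFn v) S.subtype]
  rfl

lemma index_eq_of_trans {G : Type*} [Group G] (H K : Subgroup G)
    (htrans : ∀ g : G, ∃ k ∈ K, ∃ h ∈ H, g = k * h) :
    (H.subgroupOf K).index = H.index := by
  rw [Subgroup.index_eq_card, Subgroup.index_eq_card]
  refine Nat.card_eq_of_bijective (Quotient.map' (Subtype.val) ?_) ⟨?_, ?_⟩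
  · intro a b hab
    rw [QuotientGroup.leftRel_apply] at hab ⊢
    exact hab
  · intro a b hab
    induction a using Quotient.inductionOn'
    induction b using Quotient.inductionOn'
    rw [Quotient.map'_mk'', Quotient.map'_mk'', Quotient.eq''] at hab
    rw [Quotient.eq'']
    rw [QuotientGroup.leftRel_apply] at hab ⊢
    exact hab
  · intro q
    induction q using Quotient.inductionOn'
    rename_i g
    obtain ⟨k, hk, h, hh, rfl⟩ := htrans g
    refine ⟨Quotient.mk'' ⟨k, hk⟩, ?_⟩
    rw [Quotient.map'_mk'', Quotient.eq'', QuotientGroup.leftRel_apply]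
    simpa using hh

/-- Holmes's Condition 2.4: if `H` has an MLS, `K` acts transitively on the
cosets of `H` (that is, `G = KH`), and `K` has an MLS whose first block is the
subgroup `K ∩ H` (the remaining blocks having total length
`minLSLength [K : K ∩ H]`), then `G` has an MLS. -/
theorem hasMLS_of_holmes_condition
    (G : Type*) [Group G] [Finite G] (H K : Subgroup G)
    (hH : HasMLS H)
    (htrans : ∀ g : G, ∃ k ∈ K, ∃ h ∈ H, g = k * h)
    (hK : ∃ s : ℕ, ∃ B : Fin (s + 1) → Finset K,
      IsLogSig B ∧
      (↑(B 0) : Set K) = ((H.subgroupOf K : Subgroup K) : Set K) ∧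
      ∑ i : Fin s, (B i.succ).card = minLSLength (H.subgroupOf K).index) :
    HasMLS G := by
  classical
  obtain ⟨sA, A, hA, hAcard⟩ := hH
  obtain ⟨s, B, hB, hB0, hBcard⟩ := hK
  have hB0mem : ∀ x : K, x ∈ B 0 ↔ (x : G) ∈ H := by
    intro x
    rw [← Finset.mem_coe, hB0, SetLike.mem_coe, Subgroup.mem_subgroupOf]
  set C : Fin (sA + s) → Finset G :=
    Fin.append (fun i => (A i).image ((↑) : H → G)) (fun i => (B i.succ).image ((↑) : K → G))
    with hC
  -- decomposition of any valid tuple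
  have decomp : ∀ t : Fin (sA + s) → G, (∀ i, t i ∈ C i) →
      ∃ v : Fin sA → H, ∃ w : Fin s → K, (∀ i, v i ∈ A i) ∧ (∀ i, w i ∈ B i.succ) ∧
        t = Fin.append (fun i => ((v i : G))) (fun i => ((w i : G))) := by
    intro t ht
    have h1 : ∀ i : Fin sA, ∃ a, a ∈ A i ∧ (a : G) = t (Fin.castAdd s i) := by
      intro i
      have := ht (Fin.castAdd s i)
      rw [hC, Fin.append_left] at this
      simpa [Finset.mem_image] using this
    have h2 : ∀ i : Fin s, ∃ b, b ∈ B i.succ ∧ (b : G) = t (Fin.natAdd sA i) := by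
      intro i
      have := ht (Fin.natAdd sA i)
      rw [hC, Fin.append_right] at this
      simpa [Finset.mem_image] using this
    choose v hv1 hv2 using h1
    choose w hw1 hw2 using h2
    refine ⟨v, w, hv1, hw1, ?_⟩
    funext i
    induction i using Fin.addCases with
    | left i => rw [Fin.append_left]; exact (hv2 i).symm
    | right i => rw [Fin.append_right]; exact (hw2 i).symm
  -- product of a decomposed tuple
  have prodeq : ∀ (v : Fin sA → H) (w : Fin s → K),
      (List.ofFn (Fin.append (fun i => ((v i : G))) (fun i => ((w i : G))))).prod =
        ((List.ofFn v).prod : G) * ((List.ofFn w).prod : G) := by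
    intro v w
    rw [List.ofFn_fin_append, List.prod_append, coe_ofFn_prod, coe_ofFn_prod]
  -- B-products: first entry splits off
  have Bsplit : ∀ u : Fin (s + 1) → K,
      (List.ofFn u).prod = u 0 * (List.ofFn (fun i => u i.succ)).prod := by
    intro u
    rw [List.ofFn_succ, List.prod_cons]
  refine ⟨sA + s, C, ?_, ?_⟩
  · -- IsLogSig
    intro g
    have uniq : ∀ t₁ t₂ : Fin (sA + s) → G,
        ((∀ i, t₁ i ∈ C i) ∧ (List.ofFn t₁).prod = g) →
        ((∀ i, t₂ i ∈ C i) ∧ (List.ofFn t₂).prod = g) → t₁ = t₂ := by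
      rintro t₁ t₂ ⟨hm₁, hp₁⟩ ⟨hm₂, hp₂⟩
      obtain ⟨v₁, w₁, hv₁, hw₁, rfl⟩ := decomp t₁ hm₁
      obtain ⟨v₂, w₂, hv₂, hw₂, rfl⟩ := decomp t₂ hm₂
      rw [prodeq] at hp₁ hp₂
      set p₁ := (List.ofFn v₁).prod with hP1
      set p₂ := (List.ofFn v₂).prod with hP2
      set q₁ := (List.ofFn w₁).prod with hQ1
      set q₂ := (List.ofFn w₂).prod with hQ2
      have e : (p₂ : G) * q₂ = (p₁ : G) * q₁ := hp₂.trans hp₁.symm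
      have key : ((q₂ * q₁⁻¹ : K) : G) = (p₂ : G)⁻¹ * p₁ := by
        push_cast
        apply mul_right_cancel (b := (q₁ : G))
        rw [inv_mul_cancel_right, mul_assoc, ← e, inv_mul_cancel_left]
      have hx0 : q₂ * q₁⁻¹ ∈ B 0 := by
        rw [hB0mem, key]
        exact H.mul_mem (H.inv_mem p₂.2) p₁.2
      have h10 : (1 : K) ∈ B 0 := by rw [hB0mem]; simpa using H.one_mem
      have hd₁ : (∀ i, (Fin.cases (q₂ * q₁⁻¹) w₁ : ∀ _ : Fin (s+1), K) i ∈ B i) ∧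
          (List.ofFn (Fin.cases (q₂ * q₁⁻¹) w₁ : ∀ _ : Fin (s+1), K)).prod = q₂ := by
        constructor
        · intro i
          induction i using Fin.cases with
          | zero => simpa using hx0
          | succ i => simpa using hw₁ i
        · rw [Bsplit]
          simp only [Fin.cases_zero, Fin.cases_succ]
          rw [← hQ1, inv_mul_cancel_right]
      have hd₂ : (∀ i, (Fin.cases (1 : K) w₂ : ∀ _ : Fin (s+1), K) i ∈ B i) ∧
          (List.ofFn (Fin.cases (1 : K) w₂ : ∀ _ : Fin (s+1), K)).prod = q₂ := by
        constructor
        · intro i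
          induction i using Fin.cases with
          | zero => simpa using h10
          | succ i => simpa using hw₂ i
        · rw [Bsplit]
          simp only [Fin.cases_zero, Fin.cases_succ]
          rw [← hQ2, one_mul]
      have hdd := (hB q₂).unique hd₁ hd₂
      have hw : w₁ = w₂ := by
        funext i
        have := congrFun hdd i.succ
        simpa using this
      have hq : q₁ = q₂ := by rw [hQ1, hQ2, hw]
      have hp : p₁ = p₂ := by
        apply Subtype.ext
        apply mul_right_cancel (b := (q₁ : G))
        rw [hq] at e ⊢
        exact e.symm
      have hv : v₁ = v₂ := (hA p₁).unique ⟨hv₁, rfl⟩ ⟨hv₂, by rw [← hP2, hp]⟩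
      rw [hv, hw]
    obtain ⟨k, hk, h, hh, hg⟩ := htrans g⁻¹
    obtain ⟨u, ⟨hu1, hu2⟩, -⟩ := hB (⟨k, hk⟩ : K)⁻¹
    have hu0H : ((u 0 : K) : G) ∈ H := (hB0mem _).mp (hu1 0)
    obtain ⟨v, ⟨hv1, hv2⟩, -⟩ := hA ⟨h⁻¹ * ↑(u 0), H.mul_mem (H.inv_mem hh) hu0H⟩
    set t : Fin (sA + s) → G :=
      Fin.append (fun i => ((v i : G))) (fun i => ((u i.succ : G))) with hT
    have htmem : ∀ i, t i ∈ C i := by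
      intro i
      induction i using Fin.addCases with
      | left i =>
        rw [hT, hC, Fin.append_left, Fin.append_left]
        exact Finset.mem_image_of_mem _ (hv1 i)
      | right i =>
        rw [hT, hC, Fin.append_right, Fin.append_right]
        exact Finset.mem_image_of_mem _ (hu1 i.succ)
    have htprod : (List.ofFn t).prod = g := by
      rw [hT, prodeq, hv2]
      have htail : ((List.ofFn (fun i => u i.succ)).prod : K) = (u 0)⁻¹ * (⟨k, hk⟩ : K)⁻¹ := by
        rw [eq_inv_mul_iff_mul_eq, ← Bsplit, hu2]
      rw [htail]
      push_cast
      have hg' : g = h⁻¹ * k⁻¹ := by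
        rw [← inv_inv g, hg, mul_inv_rev]
      rw [hg']
      group
    exact ⟨t, ⟨htmem, htprod⟩, fun t' ht' => uniq t' t ht' ⟨htmem, htprod⟩⟩
  · -- cardinality
    have hsum : ∑ i, (C i).card =
        (∑ i : Fin sA, (A i).card) + ∑ i : Fin s, (B i.succ).card := by
      rw [Fin.sum_univ_add]
      congr 1
      · apply Finset.sum_congr rfl
        intro i _
        rw [hC, Fin.append_left, Finset.card_image_of_injective _ Subtype.val_injective]
      · apply Finset.sum_congr rfl
        intro i _
        rw [hC, Fin.append_right, Finset.card_image_of_injective _ Subtype.val_injective]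
    have hne1 : Nat.card H ≠ 0 := Nat.card_pos.ne'
    have hne2 : (H.subgroupOf K).index ≠ 0 := by
      rw [index_eq_of_trans H K htrans]
      exact H.index_ne_zero_of_finite
    have hcardG : Nat.card G = Nat.card H * (H.subgroupOf K).index := by
      rw [index_eq_of_trans H K htrans, Subgroup.card_mul_index]
    rw [hsum, hAcard, hBcard, hcardG, minLSLength_mul hne1 hne2]
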